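/- Let (X,d) be a T₁ quasi-metric space in which forward convergence implies backward convergence. If (X,d) is a UC space, then the associated metric space (X,d^s), where d^s(x,y)=max{d(x,y),d(y,x)}, is a UC metric space. -/
import Mathlib


open Filter Topology Set

structure IsQuasiMetric {X : Type*} (d : X → X → ℝ) : Prop where
  nonneg : ∀ x y, 0 ≤ d x y
  refl : ∀ x, d x x = 0
  eq_of_both_zero : ∀ x y, d x y = 0 → d y x = 0 → x = y
  triangle : ∀ x y z, d x y ≤ d x z + d z y

/-- The forward topology generated by forward balls `B⁺(x,ε) = {y | d x y < ε}`. -/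
def forwardTopology {X : Type*} (d : X → X → ℝ) : TopologicalSpace X :=
  TopologicalSpace.generateFrom {S | ∃ x : X, ∃ ε : ℝ, 0 < ε ∧ S = {y | d x y < ε}}

/-- `s` forward converges to `x`: `d x (s n) → 0`. -/
def ForwardConv {X : Type*} (d : X → X → ℝ) (s : ℕ → X) (x : X) : Prop :=
  ∀ ε > (0:ℝ), ∃ N : ℕ, ∀ n ≥ N, d x (s n) < ε

/-- `s` backward converges to `x`: `d (s n) x → 0`. -/
def BackwardConv {X : Type*} (d : X → X → ℝ) (s : ℕ → X) (x : X) : Prop :=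
  ∀ ε > (0:ℝ), ∃ N : ℕ, ∀ n ≥ N, d (s n) x < ε

/-- `x` is a cluster point of `s`: some subsequence forward converges to `x`. -/
def IsClusterPointOf {X : Type*} (d : X → X → ℝ) (s : ℕ → X) (x : X) : Prop :=
  ∃ φ : ℕ → ℕ, StrictMono φ ∧ ForwardConv d (s ∘ φ) x

def LeftKCauchy {X : Type*} (d : X → X → ℝ) (s : ℕ → X) : Prop :=
  ∀ ε > (0:ℝ), ∃ n₀ : ℕ, ∀ k n : ℕ, n₀ ≤ k → k ≤ n → d (s k) (s n) < ε

/-- `s` is forward parallel to `t`. -/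
def ForwardParallel {X : Type*} (d : X → X → ℝ) (s t : ℕ → X) : Prop :=
  ∀ ε > (0:ℝ), ∃ N : ℕ, ∀ n ≥ N, d (s n) (t n) < ε

/-- Forward continuity for real-valued functions (ε-δ form). -/
def ForwardContinuous {X : Type*} (d : X → X → ℝ) (f : X → ℝ) : Prop :=
  ∀ x₀ : X, ∀ ε > (0:ℝ), ∃ δ > (0:ℝ), ∀ y, d x₀ y < δ → |f x₀ - f y| < ε

/-- Uniform continuity for real-valued functions. -/
def UniformlyCont {X : Type*} (d : X → X → ℝ) (f : X → ℝ) : Prop :=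
  ∀ ε > (0:ℝ), ∃ δ > (0:ℝ), ∀ x y, d x y < δ → |f x - f y| < ε

/-- `(X,d)` is a UC quasi-metric space. -/
def IsUC {X : Type*} (d : X → X → ℝ) : Prop :=
  ∀ f : X → ℝ, ForwardContinuous d f → UniformlyCont d f

/-- Distance between two sets: `inf {d a b | a ∈ A, b ∈ B}`. -/
noncomputable def setDist {X : Type*} (d : X → X → ℝ) (A B : Set X) : ℝ :=
  sInf {r : ℝ | ∃ a ∈ A, ∃ b ∈ B, d a b = r}

/-- if a T₁ quasi-metric space with forward ⟹ backward convergence is UC,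
then its associated metric space `(X, dˢ)` is UC. -/
theorem assoc_metric_isUC {X : Type*} (d : X → X → ℝ) (hd : IsQuasiMetric d)
    (hT1 : ∀ x y : X, x ≠ y → 0 < d x y)
    (hfb : ∀ (s : ℕ → X) (x : X), ForwardConv d s x → BackwardConv d s x)
    (hUC : IsUC d) :
    IsUC (fun x y => max (d x y) (d y x)) := by
  intro f hf
  have hfd : ForwardContinuous d f := by
    intro x₀ ε hε
    by_contra h
    push_neg at h
    choose y hy1 hy2 using fun n : ℕ => h (1/(n+1)) (by positivity)
    have hfc : ForwardConv d y x₀ := by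
      intro ε' hε'
      obtain ⟨N, hN⟩ := exists_nat_one_div_lt hε'
      refine ⟨N, fun n hn => lt_of_lt_of_le (hy1 n) (le_of_lt ?_)⟩
      calc (1:ℝ)/(n+1) ≤ 1/(N+1) := by
            apply one_div_le_one_div_of_le (by positivity)
            exact_mod_cast Nat.succ_le_succ hn
        _ < ε' := hN
    have hbc := hfb y x₀ hfc
    obtain ⟨δ, hδ, hδ'⟩ := hf x₀ ε hε
    obtain ⟨Nf, hNf⟩ := hfc δ hδ
    obtain ⟨Nb, hNb⟩ := hbc δ hδ
    have h1 := hNf (max Nf Nb) (le_max_left _ _)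
    have h2 := hNb (max Nf Nb) (le_max_right _ _)
    have := hδ' (y (max Nf Nb)) (max_lt h1 h2)
    exact absurd this (not_lt.2 (hy2 _))
  intro ε hε
  obtain ⟨δ, hδ, hδ'⟩ := hUC f hfd ε hε
  exact ⟨δ, hδ, fun x y h => hδ' x y (lt_of_le_of_lt (le_max_left _ _) h)⟩
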